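/- For any finite simple graph G, |E(G)| ≤ h(T(G)), i.e., the number of edges of G is at most the primitive hole number of the total graph of G. -/

import Mathlib

/-- The primitive hole number of a simple graph: the number of triangles
(3-cliques) in the graph. -/
noncomputable def SimpleGraph.holeNumber {V : Type*} (G : SimpleGraph V) : ℕ :=
  {s : Finset V | G.IsNClique 3 s}.ncard

/-- The primitive degree of a vertex: the number of triangles (3-cliques)
of the graph containing that vertex. -/
noncomputable def SimpleGraph.primDegree {V : Type*} (G : SimpleGraph V) (v : V) : ℕ :=
  {s : Finset V | G.IsNClique 3 s ∧ v ∈ s}.ncard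

/-- The total graph of a simple graph `G`: vertices are the vertices and edges of `G`,
two of them adjacent iff the corresponding elements of `G` are adjacent or incident. -/
def SimpleGraph.totalGraph {V : Type*} (G : SimpleGraph V) :
    SimpleGraph (V ⊕ G.edgeSet) where
  Adj x y :=
    match x, y with
    | Sum.inl u, Sum.inl v => G.Adj u v
    | Sum.inl u, Sum.inr e => u ∈ (e : Sym2 V)
    | Sum.inr e, Sum.inl u => u ∈ (e : Sym2 V)
    | Sum.inr e, Sum.inr f => e ≠ f ∧ ∃ v, v ∈ (e : Sym2 V) ∧ v ∈ (f : Sym2 V)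
  symm := ⟨by
    rintro (u | e) (v | f) h
    · exact G.adj_symm h
    · exact h
    · exact h
    · exact ⟨h.1.symm, h.2.imp fun v hv => ⟨hv.2, hv.1⟩⟩⟩
  loopless := ⟨by
    rintro (u | e) h
    · exact G.irrefl h
    · exact h.1 rfl⟩


/-- For any finite simple graph `G`, `|E(G)| ≤ h(T(G))`. -/
theorem card_edgeSet_le_holeNumber_totalGraph {V : Type*} [Fintype V]
    (G : SimpleGraph V) : G.edgeSet.ncard ≤ G.totalGraph.holeNumber := by
  classical
  let pair : Sym2 V → Finset (V ⊕ G.edgeSet) :=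
    Sym2.lift ⟨fun u v => {Sum.inl u, Sum.inl v}, fun u v => Finset.pair_comm _ _⟩
  let f : Sym2 V → Finset (V ⊕ G.edgeSet) := fun e =>
    if h : e ∈ G.edgeSet then insert (Sum.inr ⟨e, h⟩) (pair e) else ∅
  have hpair : ∀ (e : Sym2 V) (x : V ⊕ G.edgeSet), x ∈ pair e → ∃ u, x = Sum.inl u ∧ u ∈ e := by
    intro e
    induction e using Sym2.ind with
    | _ u v =>
      intro x hx
      simp only [pair, Sym2.lift_mk, Finset.mem_insert, Finset.mem_singleton] at hx
      rcases hx with rfl | rfl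
      · exact ⟨u, rfl, by simp⟩
      · exact ⟨v, rfl, by simp⟩
  apply Set.ncard_le_ncard_of_injOn f ?_ ?_ (Set.toFinite _)
  · intro e he
    induction e using Sym2.ind with
    | _ u v =>
      have hadj : G.Adj u v := (SimpleGraph.mem_edgeSet G).mp he
      have hfe : f s(u, v) = insert (Sum.inr ⟨s(u, v), he⟩) {Sum.inl u, Sum.inl v} := by
        simp only [f, dif_pos he]
        rfl
      rw [Set.mem_setOf_eq, hfe]
      constructor
      · intro x hx y hy hne
        simp only [Finset.coe_insert, Set.mem_insert_iff, Finset.coe_singleton,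
          Finset.mem_insert, Finset.mem_singleton, Finset.mem_coe] at hx hy
        have hmemu : u ∈ (((⟨s(u, v), he⟩ : G.edgeSet) : Sym2 V)) := by simp
        have hmemv : v ∈ (((⟨s(u, v), he⟩ : G.edgeSet) : Sym2 V)) := by simp
        rcases hx with rfl | rfl | rfl <;> rcases hy with rfl | rfl | rfl <;>
          first
          | exact absurd rfl hne
          | exact hadj
          | exact hadj.symm
          | exact hmemu
          | exact hmemv
      · rw [Finset.card_insert_of_notMem (by simp), Finset.card_insert_of_notMem (by simp [hadj.ne]),
          Finset.card_singleton]
  · intro e he e' he' hfe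
    simp only [f, dif_pos he, dif_pos he'] at hfe
    have : (Sum.inr ⟨e, he⟩ : V ⊕ G.edgeSet) ∈ insert (Sum.inr ⟨e', he'⟩) (pair e') := by
      rw [← hfe]; exact Finset.mem_insert_self _ _
    rcases Finset.mem_insert.mp this with h | h
    · exact congrArg Subtype.val (Sum.inr_injective h)
    · obtain ⟨u, hu, -⟩ := hpair _ _ h
      exact absurd hu (by simp)
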